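/- Let φ : ℝ → [0,∞) be an even, nonnegative Schwartz function with ∫₀^∞ s·φ(s) ds = 1. Define W*_t(λ) := Σ_{n∈ℤ} φ((arccos(1 − λ/2) − 2πn)·t) for t > 0 and λ ∈ (0,4]. Then for every λ ∈ (0,4], ∫₀^∞ t · W*_t(λ) dt = λ^{−1}. -/

import Mathlib

open MeasureTheory Real Set
open scoped ENNReal

lemma keySum {x : ℝ} (hx : ∀ n : ℤ, x - 2*π*n ≠ 0) :
    Summable (fun n : ℤ => ((x - 2*π*n)^2)⁻¹) ∧
      ∑' n : ℤ, ((x - 2*π*n)^2)⁻¹ = (2*(1 - Real.cos x))⁻¹ := by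
  haveI : Fact ((0:ℝ) < 2*π) := ⟨by positivity⟩
  have h2πC : (2*π : ℂ) ≠ 0 := by
    simp [Real.pi_ne_zero]
  set h : ℝ → ℂ := fun θ => Complex.exp ((x*θ/(2*π) : ℝ) * Complex.I) with hh
  have hmeas : Measurable h := by
    apply Complex.measurable_exp.comp
    fun_prop
  set g : AddCircle (2*π) → ℂ := AddCircle.liftIoc (2*π) 0 h with hgdef
  have hnorm : ∀ z, ‖g z‖ = 1 := by
    intro z
    show ‖h _‖ = 1
    exact Complex.norm_exp_ofReal_mul_I _
  have hgm : Measurable g := by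
    have h1 : Measurable (AddCircle.equivIoc (2*π) 0) :=
      (AddCircle.measurableEquivIoc (2*π) 0).measurable
    exact (hmeas.comp measurable_subtype_coe).comp h1
  have hmem : MemLp g 2 AddCircle.haarAddCircle :=
    MemLp.of_bound hgm.aestronglyMeasurable 1 (Filter.Eventually.of_forall fun z => (hnorm z).le)
  set f := hmem.toLp g with hfdef
  have hfg : ⇑f =ᵐ[AddCircle.haarAddCircle] g := hmem.coeFn_toLp
  have hc : ∀ n : ℤ, fourierCoeff (⇑f) n = fourierCoeff g n := by
    intro n
    exact integral_congr_ae (hfg.mono fun z hz => by simp only; rw [hz])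
  have hcos : Real.cos x ≠ 1 := by
    intro hone
    obtain ⟨n, hn⟩ := (Real.cos_eq_one_iff x).mp hone
    exact hx n (by linarith)
  have hKpos : 0 < 2*(1 - Real.cos x) := by
    have := Real.cos_le_one x
    rcases this.lt_or_eq with h1 | h1
    · linarith
    · exact absurd h1 hcos
  have hval : ∀ n : ℤ, fourierCoeff g n
      = (Complex.exp (x*Complex.I) - 1) / (Complex.I * ((x:ℂ) - 2*π*n)) := by
    intro n
    set c : ℂ := Complex.I * ((x:ℂ) - 2*π*n) / (2*π) with hcdef
    have hxnC : ((x:ℂ) - 2*π*n) ≠ 0 := by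
      intro hzero
      apply hx n
      have := congrArg Complex.re hzero
      simpa using this
    have hcne : c ≠ 0 := by
      rw [hcdef]
      exact div_ne_zero (mul_ne_zero Complex.I_ne_zero hxnC) h2πC
    rw [hgdef, fourierCoeff_liftIoc_eq, fourierCoeffOn_eq_integral]
    have hpt : ∀ θ : ℝ, (fourier (-n) (θ : AddCircle (0+2*π-0))) • h θ = Complex.exp (c * θ) := by
      intro θ
      rw [fourier_coe_apply, hh, smul_eq_mul, ← Complex.exp_add]
      congr 1
      rw [hcdef]
      push_cast
      field_simp
      ring
    rw [intervalIntegral.integral_congr (fun θ _ => hpt θ)]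
    rw [integral_exp_mul_complex hcne]
    have h0 : c * ((0:ℝ):ℂ) = 0 := by push_cast; ring
    have hend : c * (((0+2*π:ℝ)):ℂ) = (x:ℂ) * Complex.I + ((-n : ℤ):ℂ) * (2*(π:ℂ)*Complex.I) := by
      rw [hcdef]
      push_cast
      field_simp
      ring
    rw [h0, hend, Complex.exp_add, Complex.exp_int_mul_two_pi_mul_I, mul_one, Complex.exp_zero,
      Complex.real_smul]
    rw [hcdef]
    push_cast
    field_simp
    ring
  have hnormsq : ∀ n : ℤ, ‖fourierCoeff (⇑f) n‖^2
      = 2*(1 - Real.cos x) * ((x - 2*π*n)^2)⁻¹ := by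
    intro n
    rw [hc n, hval n]
    rw [norm_div, div_pow, norm_mul, Complex.norm_I, one_mul]
    have h1 : ‖Complex.exp ((x:ℝ)*Complex.I) - 1‖^2 = 2*(1 - Real.cos x) := by
      have hre : (Complex.exp ((x:ℝ)*Complex.I) - 1).re = Real.cos x - 1 := by
        simp [Complex.exp_ofReal_mul_I_re]
      have him : (Complex.exp ((x:ℝ)*Complex.I) - 1).im = Real.sin x := by
        simp [Complex.exp_ofReal_mul_I_im]
      rw [Complex.sq_norm, Complex.normSq_apply, hre, him]
      nlinarith [Real.sin_sq_add_cos_sq x]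
    have h2 : ‖((x:ℂ) - 2*π*n)‖^2 = (x - 2*π*n)^2 := by
      have : ((x:ℂ) - 2*π*n) = ((x - 2*π*n : ℝ) : ℂ) := by push_cast; ring
      rw [this, Complex.norm_real, Real.norm_eq_abs, sq_abs]
    rw [h1, h2, div_eq_mul_inv]
  have hs2 : Summable fun n : ℤ => ‖fourierCoeff (⇑f) n‖^2 := by
    have hsum := (lp.memℓp (fourierBasis.repr f)).summable
      (by norm_num : 0 < (2:ℝ≥0∞).toReal)
    refine hsum.congr fun n => ?_
    have h2 : ((2:ENNReal)).toReal = ((2:ℕ):ℝ) := by simp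
    rw [fourierBasis_repr, h2, Real.rpow_natCast]
  have hpar : ∑' n : ℤ, ‖fourierCoeff (⇑f) n‖^2 = 1 := by
    rw [tsum_sq_fourierCoeff f]
    calc ∫ z, ‖f z‖^2 ∂AddCircle.haarAddCircle
        = ∫ z, ‖g z‖^2 ∂AddCircle.haarAddCircle :=
          integral_congr_ae (hfg.mono fun z hz => by simp only; rw [hz])
      _ = 1 := by simp [hnorm]
  have hKne : (2*(1 - Real.cos x)) ≠ 0 := ne_of_gt hKpos
  have hsummable : Summable (fun n : ℤ => ((x - 2*π*n)^2)⁻¹) := by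
    refine (hs2.mul_left (2*(1 - Real.cos x))⁻¹).congr fun n => ?_
    rw [hnormsq n, ← mul_assoc, inv_mul_cancel₀ hKne, one_mul]
  refine ⟨hsummable, ?_⟩
  have : ∑' n : ℤ, ((x - 2*π*n)^2)⁻¹
      = (2*(1 - Real.cos x))⁻¹ * ∑' n : ℤ, ‖fourierCoeff (⇑f) n‖^2 := by
    rw [← tsum_mul_left]
    exact tsum_congr fun n => by
      rw [hnormsq n, ← mul_assoc, inv_mul_cancel₀ hKne, one_mul]
  rw [this, hpar, mul_one]

lemma integAux (φ : SchwartzMap ℝ ℝ) {a : ℝ} (ha : a ≠ 0) :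
    Integrable (fun t : ℝ => t * φ (a*t)) volume := by
  have h0 : Integrable (fun s : ℝ => s * φ s) volume := by
    refine (φ.integrable_pow_mul volume 1).mono
      (continuous_id.mul φ.continuous).aestronglyMeasurable
      (Filter.Eventually.of_forall fun s => ?_)
    simp [abs_mul, abs_nonneg]
  have h1 : Integrable (fun t : ℝ => (a*t) * φ (a*t)) volume := h0.comp_mul_left' ha
  refine (h1.const_mul a⁻¹).congr (Filter.Eventually.of_forall fun t => ?_)
  field_simp

lemma scaleAux (φ : SchwartzMap ℝ ℝ) (hφ_even : ∀ x : ℝ, φ (-x) = φ x)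
    (hφ_norm : ∫ s in Set.Ioi (0 : ℝ), s * φ s = 1) {a : ℝ} (ha : a ≠ 0) :
    ∫ t in Set.Ioi (0:ℝ), t * φ (a*t) = (a^2)⁻¹ := by
  have pos : ∀ b : ℝ, 0 < b → ∫ t in Set.Ioi (0:ℝ), t * φ (b*t) = (b^2)⁻¹ := by
    intro b hb
    have h := integral_comp_mul_left_Ioi (fun s => s * φ s) 0 hb
    rw [mul_zero, hφ_norm, smul_eq_mul, mul_one] at h
    calc ∫ t in Set.Ioi (0:ℝ), t * φ (b*t)
        = ∫ t in Set.Ioi (0:ℝ), b⁻¹ * ((b*t) * φ (b*t)) := by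
          refine setIntegral_congr_fun measurableSet_Ioi fun t _ => ?_
          rw [← mul_assoc, inv_mul_cancel_left₀ hb.ne']
      _ = b⁻¹ * ∫ t in Set.Ioi (0:ℝ), (b*t) * φ (b*t) := by
          rw [integral_const_mul]
      _ = (b^2)⁻¹ := by rw [h]; rw [sq, mul_inv]
  rcases ha.lt_or_gt with hneg | hpos
  · have : ∀ t : ℝ, t * φ (a*t) = t * φ ((-a)*t) := by
      intro t
      rw [show (-a)*t = -(a*t) by ring, hφ_even]
    simp_rw [this]
    rw [pos (-a) (by linarith), neg_pow]
    norm_num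
  · exact pos a hpos

theorem stmt2 (φ : SchwartzMap ℝ ℝ) (hφ_even : ∀ x : ℝ, φ (-x) = φ x)
    (hφ_nonneg : ∀ x : ℝ, 0 ≤ φ x)
    (hφ_norm : ∫ s in Set.Ioi (0 : ℝ), s * φ s = 1) :
    ∀ lam ∈ Set.Ioc (0 : ℝ) 4,
      ∫ t in Set.Ioi (0 : ℝ),
        t * ∑' n : ℤ, φ ((Real.arccos (1 - lam / 2) - 2 * Real.pi * n) * t) = lam⁻¹ := by
  intro lam hlam
  obtain ⟨hlam0, hlam4⟩ := hlam
  set x := Real.arccos (1 - lam/2) with hxdef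
  have hπ := Real.pi_pos
  have hx1 : 0 < x := Real.arccos_pos.mpr (by linarith)
  have hx2 : x ≤ π := Real.arccos_le_pi _
  have hcos : Real.cos x = 1 - lam/2 := Real.cos_arccos (by linarith) (by linarith)
  have hxn : ∀ n : ℤ, x - 2*π*n ≠ 0 := by
    intro n h
    have hn : x = 2*π*n := by linarith
    rcases lt_trichotomy n 0 with h1|h1|h1
    · have h2 : (n:ℝ) ≤ -1 := by exact_mod_cast Int.le_sub_one_of_lt h1
      nlinarith
    · rw [h1] at hn; simp at hn; linarith
    · have h2 : (1:ℝ) ≤ (n:ℝ) := by exact_mod_cast h1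
      nlinarith
  obtain ⟨hsum, htsum⟩ := keySum hxn
  have hterm : ∀ n : ℤ, ∫ t in Set.Ioi (0:ℝ), t * φ ((x - 2*π*n) * t) = ((x - 2*π*n)^2)⁻¹ :=
    fun n => scaleAux φ hφ_even hφ_norm (hxn n)
  have hnormint : ∀ n : ℤ,
      ∫ t in Set.Ioi (0:ℝ), ‖t * φ ((x - 2*π*n) * t)‖ = ((x - 2*π*n)^2)⁻¹ := by
    intro n
    rw [← hterm n]
    refine setIntegral_congr_fun measurableSet_Ioi fun t ht => ?_
    exact Real.norm_of_nonneg (mul_nonneg (le_of_lt ht) (hφ_nonneg _))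
  have hswap := integral_tsum_of_summable_integral_norm
    (F := fun (n:ℤ) (t:ℝ) => t * φ ((x - 2*π*n)*t)) (μ := volume.restrict (Set.Ioi 0))
    (fun n => (integAux φ (hxn n)).restrict)
    (by refine Summable.congr hsum fun n => ?_; rw [hnormint n])
  calc ∫ t in Set.Ioi (0:ℝ), t * ∑' n : ℤ, φ ((x - 2*π*n) * t)
      = ∫ t in Set.Ioi (0:ℝ), ∑' n : ℤ, t * φ ((x - 2*π*n) * t) := by
        simp_rw [tsum_mul_left]
    _ = ∑' n : ℤ, ∫ t in Set.Ioi (0:ℝ), t * φ ((x - 2*π*n) * t) := hswap.symm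
    _ = ∑' n : ℤ, ((x - 2*π*n)^2)⁻¹ := tsum_congr hterm
    _ = (2*(1 - Real.cos x))⁻¹ := htsum
    _ = lam⁻¹ := by rw [hcos]; ring_nf
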